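/- If a, b, n are positive integers with b ∈ {1, 2, 3} and n > 2, then the real n-th root of a^n + b^n is irrational. -/

import Mathlib

lemma key_ineq : ∀ n, 3 ≤ n → ∀ m b : ℕ, 1 ≤ b → b ≤ m → b ≤ 3 → m ^ n + b ^ n < (m + 1) ^ n := by
  intro n hn
  induction n, hn using Nat.le_induction with
  | base =>
    intro m b hb1 hbm hb3
    have h : b ^ 3 ≤ 3 * (m * m) := by
      calc b ^ 3 = b * (b * b) := by ring
        _ ≤ 3 * (m * m) := Nat.mul_le_mul hb3 (Nat.mul_le_mul hbm hbm)
    have hm1 : 1 ≤ m := le_trans hb1 hbm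
    nlinarith [h, hm1]
  | succ n hn ih =>
    intro m b hb1 hbm hb3
    have h := ih m b hb1 hbm hb3
    have hbn : 0 < b ^ n := Nat.pow_pos hb1 -- may not exist
    rw [pow_succ, pow_succ, pow_succ]
    have h3 : (m ^ n + b ^ n + 1) * (m + 1) ≤ (m + 1) ^ n * (m + 1) :=
      Nat.mul_le_mul_right _ h
    have h2 : b ^ n * b ≤ b ^ n * m := Nat.mul_le_mul_left _ hbm
    have h3' : m ^ n * m + b ^ n * m + m + (m ^ n + b ^ n + 1) ≤ (m + 1) ^ n * (m + 1) := by
      calc m ^ n * m + b ^ n * m + m + (m ^ n + b ^ n + 1) = (m ^ n + b ^ n + 1) * (m + 1) := by ring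
        _ ≤ (m + 1) ^ n * (m + 1) := h3
    linarith [h3', h2, Nat.zero_le (m ^ n), Nat.zero_le (b ^ n), Nat.zero_le m]

theorem stmt_13 (a b n : ℕ) (ha : 0 < a) (hb : b = 1 ∨ b = 2 ∨ b = 3) (hn : 2 < n) :
    Irrational (((a : ℝ) ^ n + (b : ℝ) ^ n) ^ ((n : ℝ)⁻¹)) := by
  have hb1 : 1 ≤ b := by rcases hb with h|h|h <;> omega
  have hb3 : b ≤ 3 := by rcases hb with h|h|h <;> omega
  set m := max a b with hm
  have hbm : b ≤ m := le_max_right a b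
  have ham : a ≤ m := le_max_left a b
  have hn0 : n ≠ 0 := by omega
  set N : ℕ := a ^ n + b ^ n with hN
  have hkey : N < (m + 1) ^ n := by
    calc N = a ^ n + b ^ n := hN
      _ ≤ m ^ n + b ^ n := by gcongr
      _ < (m + 1) ^ n := key_ineq n (by omega) m b hb1 hbm hb3
  have hlow : m ^ n < N := by
    have h1 : 0 < b ^ n := Nat.pow_pos hb1
    have h2 : 0 < a ^ n := Nat.pow_pos ha
    rcases max_choice a b with h | h <;> rw [hm, h, hN] <;> omega
  have hcast : ((a : ℝ) ^ n + (b : ℝ) ^ n) = (N : ℝ) := by push_cast [hN]; ring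
  rw [hcast]
  set x : ℝ := (N : ℝ) ^ ((n : ℝ)⁻¹) with hx
  have hNnn : (0:ℝ) ≤ (N:ℝ) := by positivity
  have hxpow : x ^ n = (N : ℝ) := Real.rpow_inv_natCast_pow hNnn hn0
  have hx0 : 0 ≤ x := Real.rpow_nonneg hNnn _
  apply irrational_nrt_of_notint_nrt n (N : ℤ) (by rw [hxpow]; push_cast; ring) _ (by omega)
  rintro ⟨y, hy⟩
  have hlt1 : (m : ℝ) < x := by
    by_contra hle
    push_neg at hle
    have : x ^ n ≤ (m:ℝ) ^ n := pow_le_pow_left₀ hx0 hle n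
    rw [hxpow] at this
    have : (N:ℝ) < (N:ℝ) := lt_of_le_of_lt this (by exact_mod_cast hlow)
    exact lt_irrefl _ this
  have hlt2 : x < (m : ℝ) + 1 := by
    by_contra hle
    push_neg at hle
    have : ((m:ℝ)+1) ^ n ≤ x ^ n := pow_le_pow_left₀ (by positivity) hle n
    rw [hxpow] at this
    have h2 : (N:ℝ) < ((m:ℝ)+1)^n := by exact_mod_cast hkey
    linarith
  rw [hy] at hlt1 hlt2
  have h1 : (m : ℤ) < y := by exact_mod_cast hlt1
  have h2 : y < (m : ℤ) + 1 := by exact_mod_cast hlt2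
  omega
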